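/- If f : X → X is a (3,2)-expansive homeomorphism of a compact metric space and x, y ∈ X are bi-asymptotic distinct points (dist(f^k(x), f^k(y)) → 0 as k → ±∞), then x and y are isolated points of X. -/

import Mathlib

variable {X : Type*} [MetricSpace X]

/-- The `k`-th iterate (`k ∈ ℤ`) of a homeomorphism, as a function. -/
noncomputable def hiter (f : X ≃ₜ X) (k : ℤ) : X → X := ⇑(f.toEquiv ^ k)

/-- A set is `δ`-separated if distinct points are at distance `> δ`. -/
def IsSeparated' (δ : ℝ) (B : Set X) : Prop :=
  ∀ x ∈ B, ∀ y ∈ B, x ≠ y → δ < dist x y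

/-- The `δ`-cardinality of a set: sup of cardinalities of `δ`-separated subsets. -/
noncomputable def dCard (δ : ℝ) (A : Set X) : ℕ∞ :=
  ⨆ B ∈ {B : Set X | B ⊆ A ∧ IsSeparated' δ B}, B.encard

/-- `(m,n)`-expansiveness with a given expansive constant `δ`. -/
def MNExpansiveWith (f : X ≃ₜ X) (m n : ℕ) (δ : ℝ) : Prop :=
  ∀ A : Set X, A.encard = m → ∃ k : ℤ, (n : ℕ∞) < dCard δ (hiter f k '' A)

/-- `(m,n)`-expansiveness. -/
def MNExpansive (f : X ≃ₜ X) (m n : ℕ) : Prop :=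
  ∃ δ > 0, MNExpansiveWith f m n δ

lemma hiter_cont (f : X ≃ₜ X) (k : ℤ) : Continuous (hiter f k) := by
  unfold hiter
  induction k using Int.induction_on with
  | zero => simpa using continuous_id
  | succ n ih => rw [zpow_add, zpow_one]; simp only [Equiv.Perm.coe_mul]
                 exact ih.comp f.continuous
  | pred n ih => rw [zpow_sub, zpow_one]; simp only [Equiv.Perm.coe_mul]
                 exact ih.comp f.symm.continuous

lemma hiter_inj (f : X ≃ₜ X) (k : ℤ) : Function.Injective (hiter f k) :=
  (f.toEquiv ^ k).injective

/-- If a 3-element set contains two distinct points at distance `≤ δ`, its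
`δ`-cardinality is at most 2. -/
lemma dCard_le_two {δ : ℝ} {S : Set X} (hS : S.encard = 3) {a b : X}
    (ha : a ∈ S) (hb : b ∈ S) (hab : a ≠ b) (hd : dist a b ≤ δ) :
    dCard δ S ≤ 2 := by
  refine iSup₂_le fun B hB => ?_
  obtain ⟨hBS, hsep⟩ := hB
  by_contra h
  push_neg at h
  have h3 : (3 : ℕ∞) ≤ B.encard := Order.add_one_le_of_lt h
  have hSfin : S.Finite := Set.finite_of_encard_eq_coe hS
  have hBeq : B = S := (hSfin.subset hBS).eq_of_subset_of_encard_le hBS (hS ▸ h3)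
  subst hBeq
  exact absurd hd (not_le.mpr (hsep a ha b hb hab))

lemma isolated_of_biasymp (f : X ≃ₜ X) {δ : ℝ} (hδ : 0 < δ)
    (hexp : MNExpansiveWith f 3 2 δ) (x y : X) (hxy : x ≠ y)
    (h1 : Filter.Tendsto (fun k : ℤ => dist (hiter f k x) (hiter f k y))
      Filter.atTop (nhds 0))
    (h2 : Filter.Tendsto (fun k : ℤ => dist (hiter f k x) (hiter f k y))
      Filter.atBot (nhds 0)) :
    nhdsWithin x {x}ᶜ = ⊥ := by
  by_contra hne
  have hNB : (nhdsWithin x {x}ᶜ).NeBot := ⟨hne⟩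
  -- find bounds beyond which x and y orbits are δ-close
  obtain ⟨N₁, hN₁⟩ := (h1.eventually_lt_const hδ).exists_forall_of_atTop
  obtain ⟨N₂, hN₂⟩ := (h2.eventually_le_const hδ).exists_forall_of_atBot
  -- a neighborhood of x where all iterates in [N₂, N₁] stay δ-close to x's
  set U : Set X := ⋂ k ∈ Finset.Icc N₂ N₁,
    (hiter f k) ⁻¹' Metric.closedBall (hiter f k x) δ with hU_def
  have hU : U ∈ nhds x := by
    refine (Filter.biInter_finset_mem _).mpr fun k _ => ?_
    exact (hiter_cont f k).continuousAt.preimage_mem_nhds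
      (Metric.closedBall_mem_nhds _ hδ)
  have hV : U ∩ Metric.ball x (dist x y) ∈ nhds x :=
    Filter.inter_mem hU (Metric.ball_mem_nhds _ (dist_pos.mpr hxy))
  have hmem : (U ∩ Metric.ball x (dist x y)) ∩ {x}ᶜ ∈ nhdsWithin x {x}ᶜ :=
    Filter.inter_mem (mem_nhdsWithin_of_mem_nhds hV) self_mem_nhdsWithin
  obtain ⟨z, ⟨⟨hzU, hzball⟩, hzx⟩⟩ := hNB.nonempty_of_mem hmem
  have hzx : z ≠ x := hzx
  have hzy : z ≠ y := by
    rintro rfl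
    exact absurd hzball (by simp [dist_comm])
  -- apply expansiveness to {x, y, z}
  have hA : ({x, y, z} : Set X).encard = 3 :=
    Set.encard_eq_three.mpr ⟨x, y, z, hxy, (Ne.symm hzx), (Ne.symm hzy), rfl⟩
  obtain ⟨k, hk⟩ := hexp {x, y, z} hA
  have hS3 : (hiter f k '' {x, y, z}).encard = 3 := by
    rw [(hiter_inj f k).encard_image]; exact hA
  have hxmem : hiter f k x ∈ hiter f k '' {x, y, z} :=
    Set.mem_image_of_mem _ (by simp)
  have hymem : hiter f k y ∈ hiter f k '' {x, y, z} :=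
    Set.mem_image_of_mem _ (by simp)
  have hzmem : hiter f k z ∈ hiter f k '' {x, y, z} :=
    Set.mem_image_of_mem _ (by simp)
  have hle : dCard δ (hiter f k '' {x, y, z}) ≤ 2 := by
    by_cases hk' : N₂ ≤ k ∧ k ≤ N₁
    · -- z's iterate is close to x's iterate
      have hcl : hiter f k z ∈ Metric.closedBall (hiter f k x) δ := by
        have := Set.mem_iInter₂.mp hzU k (Finset.mem_Icc.mpr hk')
        exact this
      exact dCard_le_two hS3 hzmem hxmem
        (fun h => hzx (hiter_inj f k h)) (Metric.mem_closedBall.mp hcl)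
    · -- x's and y's iterates are close
      have hd : dist (hiter f k x) (hiter f k y) ≤ δ := by
        rcases not_and_or.mp hk' with h | h
        · exact hN₂ k (le_of_lt (not_le.mp h))
        · exact le_of_lt (hN₁ k (le_of_lt (not_le.mp h)))
      exact dCard_le_two hS3 hxmem hymem
        (fun h => hxy (hiter_inj f k h)) hd
  exact absurd hk (not_lt.mpr hle)

theorem stmt17 [CompactSpace X] (f : X ≃ₜ X) (hf : MNExpansive f 3 2) (x y : X)
    (hxy : x ≠ y)
    (h1 : Filter.Tendsto (fun k : ℤ => dist (hiter f k x) (hiter f k y))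
      Filter.atTop (nhds 0))
    (h2 : Filter.Tendsto (fun k : ℤ => dist (hiter f k x) (hiter f k y))
      Filter.atBot (nhds 0)) :
    nhdsWithin x {x}ᶜ = ⊥ ∧ nhdsWithin y {y}ᶜ = ⊥ := by
  obtain ⟨δ, hδ, hexp⟩ := hf
  refine ⟨isolated_of_biasymp f hδ hexp x y hxy h1 h2, ?_⟩
  exact isolated_of_biasymp f hδ hexp y x hxy.symm
    (by simpa [dist_comm] using h1) (by simpa [dist_comm] using h2)
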